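/- Let β > 0, let g : Ω → ℂ^M be a random vector with independent components satisfying E[g_m] = 0, E[|g_m|²] = 1, E[|g_m|⁴] = 2, and let u : Ω → ℂ be independent of g with E[u] = 0, E[|u|²] = 1, E[|u|⁴] = 2 (as holds for standard complex Gaussians). Define the keyhole channel h = √β · u · g : Ω → ℂ^M. Then E[‖h‖²] = M β and Var(‖h‖²)/(E[‖h‖²])² = 1 + 2/M; in particular this ratio converges to 1 (not 0) as M → ∞, so the keyhole channel does not exhibit channel hardening. -/

import Mathlib

open MeasureTheory ProbabilityTheory Filter

section helpers
variable {Ω : Type*} [MeasurableSpace Ω] {μ : Measure Ω}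

lemma keyhole_iIndepFun_ae_eq {ι : Type*} {β : ι → Type*} [m : ∀ i, MeasurableSpace (β i)]
    {f f' : ∀ i, Ω → β i} (hf : iIndepFun f μ) (h : ∀ i, f i =ᵐ[μ] f' i) :
    iIndepFun f' μ := by
  rw [iIndepFun_iff_measure_inter_preimage_eq_mul] at hf ⊢
  intro S sets hsets
  have hae : ∀ᵐ ω ∂μ, ∀ i ∈ S, f i ω = f' i ω := by
    have := (ae_ball_iff S.countable_toSet).2 (fun i _ => h i)
    exact this
  have h1 : μ (⋂ i ∈ S, f' i ⁻¹' sets i) = μ (⋂ i ∈ S, f i ⁻¹' sets i) := by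
    apply measure_congr
    rw [Filter.eventuallyEq_set]
    filter_upwards [hae] with ω hω
    simp only [Set.mem_iInter, Set.mem_preimage]
    exact ⟨fun H i hi => by rw [hω i hi]; exact H i hi,
           fun H i hi => by rw [← hω i hi]; exact H i hi⟩
  rw [h1, hf S hsets]
  refine Finset.prod_congr rfl fun i _ => measure_congr ?_
  rw [Filter.eventuallyEq_set]
  filter_upwards [h i] with ω hω
  simp [Set.mem_preimage, hω]

lemma keyhole_variance_congr {X Y : Ω → ℝ} (h : X =ᵐ[μ] Y) :
    variance X μ = variance Y μ := by
  unfold ProbabilityTheory.variance ProbabilityTheory.evariance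
  rw [integral_congr_ae h]
  congr 1
  apply lintegral_congr_ae
  filter_upwards [h] with ω hω
  rw [hω]

lemma keyhole_aux (μ : Measure Ω) [IsProbabilityMeasure μ]
    {M : ℕ} (β : ℝ)
    (g : Fin M → Ω → ℂ) (u : Ω → ℂ)
    (hmg : ∀ m, Measurable (g m)) (hmu : Measurable u)
    (hindep : iIndepFun (Sum.elim g (fun _ : Unit => u)) μ)
    (hg2 : ∀ m, ∫ ω, ‖g m ω‖ ^ 2 ∂μ = 1)
    (hgf : ∀ m, ∫ ω, ‖g m ω‖ ^ 4 ∂μ = 2)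
    (hu2 : ∫ ω, ‖u ω‖ ^ 2 ∂μ = 1)
    (huf : ∫ ω, ‖u ω‖ ^ 4 ∂μ = 2)
    (intU4 : Integrable (fun ω => ‖u ω‖ ^ 4) μ)
    (intG4 : ∀ m, Integrable (fun ω => ‖g m ω‖ ^ 4) μ) :
    (∫ ω, β * (‖u ω‖ ^ 2 * ∑ m, ‖g m ω‖ ^ 2) ∂μ = M * β) ∧
    variance (fun ω => β * (‖u ω‖ ^ 2 * ∑ m, ‖g m ω‖ ^ 2)) μ
      = β ^ 2 * (M ^ 2 + 2 * M) := by
  have measY : Measurable (fun ω => ‖u ω‖ ^ 2) := hmu.norm.pow_const 2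
  have measG : ∀ m, Measurable (fun ω => ‖g m ω‖ ^ 2) := fun m => (hmg m).norm.pow_const 2
  have memY2 : MemLp (fun ω => ‖u ω‖ ^ 2) 2 μ :=
    (memLp_two_iff_integrable_sq measY.aestronglyMeasurable).2 (by simpa [← pow_mul] using intU4)
  have memG2 : ∀ m, MemLp (fun ω => ‖g m ω‖ ^ 2) 2 μ := fun m =>
    (memLp_two_iff_integrable_sq (measG m).aestronglyMeasurable).2
      (by simpa [← pow_mul] using intG4 m)
  have intY : Integrable (fun ω => ‖u ω‖ ^ 2) μ := memY2.integrable one_le_two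
  have intG : ∀ m, Integrable (fun ω => ‖g m ω‖ ^ 2) μ := fun m => (memG2 m).integrable one_le_two
  have intY2 : Integrable (fun ω => (‖u ω‖ ^ 2) ^ 2) μ := memY2.integrable_sq
  have Fmeas : ∀ i : Fin M ⊕ Unit, Measurable (Sum.elim g (fun _ : Unit => u) i) := by
    intro i
    cases i with
    | inl m => exact hmg m
    | inr x => exact hmu
  have indGG : ∀ m m' : Fin M, m ≠ m' →
      IndepFun (fun ω => ‖g m ω‖ ^ 2) (fun ω => ‖g m' ω‖ ^ 2) μ := by
    intro m m' hne
    have h1 : IndepFun (g m) (g m') μ :=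
      hindep.indepFun (show (Sum.inl m : Fin M ⊕ Unit) ≠ Sum.inl m' by simpa using hne)
    exact h1.comp (measurable_norm.pow_const 2) (measurable_norm.pow_const 2)
  have indYG : ∀ m : Fin M,
      IndepFun (fun ω => ‖u ω‖ ^ 2) (fun ω => ‖g m ω‖ ^ 2) μ := by
    intro m
    have h1 : IndepFun u (g m) μ :=
      hindep.indepFun (show (Sum.inr () : Fin M ⊕ Unit) ≠ Sum.inl m by simp)
    exact h1.comp (measurable_norm.pow_const 2) (measurable_norm.pow_const 2)
  have indPair : ∀ m m' : Fin M,
      IndepFun (fun ω => ‖g m ω‖ ^ 2 * ‖g m' ω‖ ^ 2) (fun ω => (‖u ω‖ ^ 2) ^ 2) μ := by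
    intro m m'
    have h1 : IndepFun (fun ω => (g m ω, g m' ω)) u μ :=
      hindep.indepFun_prodMk Fmeas (Sum.inl m) (Sum.inl m') (Sum.inr ()) (by simp) (by simp)
    exact h1.comp (show Measurable (fun p : ℂ × ℂ => ‖p.1‖ ^ 2 * ‖p.2‖ ^ 2) by fun_prop)
      (show Measurable (fun z : ℂ => (‖z‖ ^ 2) ^ 2) by fun_prop)
  have iY2 : ∫ ω, (‖u ω‖ ^ 2) ^ 2 ∂μ = 2 := by simpa [← pow_mul] using huf
  have P : ∀ m m' : Fin M, ∫ ω, ‖g m ω‖ ^ 2 * ‖g m' ω‖ ^ 2 ∂μ = if m = m' then 2 else 1 := by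
    intro m m'
    by_cases hmm : m = m'
    · subst hmm
      rw [if_pos rfl]
      calc ∫ ω, ‖g m ω‖ ^ 2 * ‖g m ω‖ ^ 2 ∂μ = ∫ ω, ‖g m ω‖ ^ 4 ∂μ := by
            congr 1; ext ω; ring
        _ = 2 := hgf m
    · rw [if_neg hmm]
      have h3 : ∫ ω, ‖g m ω‖ ^ 2 * ‖g m' ω‖ ^ 2 ∂μ
          = (∫ ω, ‖g m ω‖ ^ 2 ∂μ) * ∫ ω, ‖g m' ω‖ ^ 2 ∂μ :=
        (indGG m m' hmm).integral_fun_mul_eq_mul_integral (measG m).aestronglyMeasurable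
          (measG m').aestronglyMeasurable
      rw [h3, hg2, hg2, mul_one]
  have Zint : ∀ m m' : Fin M, Integrable (fun ω => ‖g m ω‖ ^ 2 * ‖g m' ω‖ ^ 2) μ := by
    intro m m'
    have := (memG2 m').smul (memG2 m) (p := 2) (q := 2) (r := 1)
    exact memLp_one_iff_integrable.1 this
  have intYG : ∀ m : Fin M, Integrable (fun ω => ‖u ω‖ ^ 2 * ‖g m ω‖ ^ 2) μ := fun m =>
    (indYG m).integrable_mul intY (intG m)
  have intT : ∀ m m' : Fin M,
      Integrable (fun ω => ‖g m ω‖ ^ 2 * ‖g m' ω‖ ^ 2 * (‖u ω‖ ^ 2) ^ 2) μ := fun m m' =>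
    (indPair m m').integrable_mul (Zint m m') intY2
  have hterm : ∀ m : Fin M, ∫ ω, ‖u ω‖ ^ 2 * ‖g m ω‖ ^ 2 ∂μ = 1 := by
    intro m
    have h1 : ∫ ω, ‖u ω‖ ^ 2 * ‖g m ω‖ ^ 2 ∂μ
        = (∫ ω, ‖u ω‖ ^ 2 ∂μ) * ∫ ω, ‖g m ω‖ ^ 2 ∂μ :=
      (indYG m).integral_fun_mul_eq_mul_integral measY.aestronglyMeasurable (measG m).aestronglyMeasurable
    rw [h1, hu2, hg2 m, mul_one]
  have E1 : ∫ ω, β * (‖u ω‖ ^ 2 * ∑ m, ‖g m ω‖ ^ 2) ∂μ = M * β := by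
    rw [integral_const_mul]
    simp only [Finset.mul_sum]
    rw [integral_finset_sum _ (fun m _ => intYG m)]
    simp only [hterm]
    rw [Finset.sum_const, Finset.card_univ, Fintype.card_fin, nsmul_eq_mul, mul_one, mul_comm]
  have hsq : ∀ ω, (β * (‖u ω‖ ^ 2 * ∑ m, ‖g m ω‖ ^ 2)) ^ 2
      = β ^ 2 * ∑ m : Fin M, ∑ m' : Fin M,
          (‖g m ω‖ ^ 2 * ‖g m' ω‖ ^ 2 * (‖u ω‖ ^ 2) ^ 2) := by
    intro ω
    have hx : (∑ m, ‖g m ω‖ ^ 2) * (∑ m', ‖g m' ω‖ ^ 2)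
        = ∑ m : Fin M, ∑ m' : Fin M, ‖g m ω‖ ^ 2 * ‖g m' ω‖ ^ 2 :=
      Finset.sum_mul_sum _ _ _ _
    calc (β * (‖u ω‖ ^ 2 * ∑ m, ‖g m ω‖ ^ 2)) ^ 2
        = β ^ 2 * (((∑ m, ‖g m ω‖ ^ 2) * (∑ m', ‖g m' ω‖ ^ 2)) * (‖u ω‖ ^ 2) ^ 2) := by ring
      _ = β ^ 2 * ((∑ m : Fin M, ∑ m' : Fin M, ‖g m ω‖ ^ 2 * ‖g m' ω‖ ^ 2) * (‖u ω‖ ^ 2) ^ 2) := by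
          rw [hx]
      _ = _ := by rw [Finset.sum_mul]; simp_rw [Finset.sum_mul]
  have hT : ∀ m m' : Fin M,
      ∫ ω, ‖g m ω‖ ^ 2 * ‖g m' ω‖ ^ 2 * (‖u ω‖ ^ 2) ^ 2 ∂μ
        = (if m = m' then 2 else 1) * 2 := by
    intro m m'
    have h1 := (indPair m m').integral_mul_eq_mul_integral
      ((measG m).mul (measG m')).aestronglyMeasurable
      (measY.pow_const 2).aestronglyMeasurable
    rw [show (∫ ω, ‖g m ω‖ ^ 2 * ‖g m' ω‖ ^ 2 * (‖u ω‖ ^ 2) ^ 2 ∂μ)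
        = ∫ ω, ((fun ω => ‖g m ω‖ ^ 2 * ‖g m' ω‖ ^ 2) * fun ω => (‖u ω‖ ^ 2) ^ 2) ω ∂μ from rfl,
      h1, P m m', iY2]
  have E2 : ∫ ω, (β * (‖u ω‖ ^ 2 * ∑ m, ‖g m ω‖ ^ 2)) ^ 2 ∂μ
      = β ^ 2 * (2 * M ^ 2 + 2 * M) := by
    simp only [hsq]
    rw [integral_const_mul,
      integral_finset_sum _ (fun m _ => integrable_finset_sum _ fun m' _ => intT m m')]
    have hinner : ∀ m : Fin M,
        ∫ ω, ∑ m' : Fin M, ‖g m ω‖ ^ 2 * ‖g m' ω‖ ^ 2 * (‖u ω‖ ^ 2) ^ 2 ∂μ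
          = 2 * M + 2 := by
      intro m
      rw [integral_finset_sum _ (fun m' _ => intT m m')]
      have : ∀ m' : Fin M, ∫ ω, ‖g m ω‖ ^ 2 * ‖g m' ω‖ ^ 2 * (‖u ω‖ ^ 2) ^ 2 ∂μ
          = 2 + (if m = m' then (2 : ℝ) else 0) := by
        intro m'
        rw [hT m m']
        split <;> norm_num
      simp only [this]
      rw [Finset.sum_add_distrib]
      simp [Finset.sum_ite_eq, mul_comm]
    simp only [hinner]
    rw [Finset.sum_const, Finset.card_univ, Fintype.card_fin, nsmul_eq_mul]
    ring
  have memS : MemLp (fun ω => β * (‖u ω‖ ^ 2 * ∑ m, ‖g m ω‖ ^ 2)) 2 μ := by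
    apply (memLp_two_iff_integrable_sq ?_).2
    · simp only [hsq]
      exact (integrable_finset_sum _ fun m _ =>
        integrable_finset_sum _ fun m' _ => intT m m').const_mul _
    · exact (measurable_const.mul (measY.mul (Finset.measurable_sum _
        fun m _ => measG m))).aestronglyMeasurable
  refine ⟨E1, ?_⟩
  rw [variance_eq_sub memS]
  have hpow : ((fun ω => β * (‖u ω‖ ^ 2 * ∑ m, ‖g m ω‖ ^ 2)) ^ 2)
      = fun ω => (β * (‖u ω‖ ^ 2 * ∑ m, ‖g m ω‖ ^ 2)) ^ 2 := rfl
  rw [hpow, E2, E1]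
  ring

end helpers

/-- **The keyhole channel does not harden.**
For `h = √β u g` with `u` scalar fading and `g` the antenna fading vector,
all with zero mean, unit second moments and fourth moments `2`, one has
`E[‖h‖²] = Mβ` and `Var(‖h‖²)/(E[‖h‖²])² = 1 + 2/M → 1 ≠ 0` as `M → ∞`. -/
theorem keyhole_channel_no_hardening
    {Ω : Type*} [MeasurableSpace Ω] (μ : Measure Ω) [IsProbabilityMeasure μ]
    {M : ℕ} (hM : 0 < M) (β : ℝ) (hβ : 0 < β)
    (g : Ω → Fin M → ℂ) (u : Ω → ℂ)
    (hindep : iIndepFun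
      (Sum.elim (fun m : Fin M => fun ω => g ω m)
        (fun _ : Unit => u)) μ)
    (hg4 : ∀ m, MemLp (fun ω => g ω m) 4 μ)
    (hg0 : ∀ m, ∫ ω, g ω m ∂μ = 0)
    (hg2 : ∀ m, ∫ ω, ‖g ω m‖ ^ 2 ∂μ = 1)
    (hgf : ∀ m, ∫ ω, ‖g ω m‖ ^ 4 ∂μ = 2)
    (hu4 : MemLp u 4 μ)
    (hu0 : ∫ ω, u ω ∂μ = 0)
    (hu2 : ∫ ω, ‖u ω‖ ^ 2 ∂μ = 1)
    (huf : ∫ ω, ‖u ω‖ ^ 4 ∂μ = 2)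
    (h : Ω → Fin M → ℂ)
    (hdef : ∀ ω m, h ω m = (Real.sqrt β : ℂ) * u ω * g ω m) :
    (∫ ω, (∑ m, ‖h ω m‖ ^ 2) ∂μ = M * β) ∧
    (variance (fun ω => ∑ m, ‖h ω m‖ ^ 2) μ
        / (∫ ω, (∑ m, ‖h ω m‖ ^ 2) ∂μ) ^ 2 = 1 + 2 / M) ∧
    Tendsto (fun M' : ℕ => 1 + 2 / (M' : ℝ)) atTop (nhds 1) := by
  classical
  let g' : Fin M → Ω → ℂ := fun m => (hg4 m).1.mk (fun ω => g ω m)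
  let u' : Ω → ℂ := hu4.1.mk u
  have hgae : ∀ m, (fun ω => g ω m) =ᵐ[μ] g' m := fun m => (hg4 m).1.ae_eq_mk
  have huae : u =ᵐ[μ] u' := hu4.1.ae_eq_mk
  have hmg' : ∀ m, Measurable (g' m) := fun m => (hg4 m).1.stronglyMeasurable_mk.measurable
  have hmu' : Measurable u' := hu4.1.stronglyMeasurable_mk.measurable
  have hindep' : iIndepFun (Sum.elim g' (fun _ : Unit => u')) μ := by
    apply keyhole_iIndepFun_ae_eq hindep
    rintro (m | x)
    · exact hgae m
    · exact huae
  have hg2' : ∀ m, ∫ ω, ‖g' m ω‖ ^ 2 ∂μ = 1 := fun m => by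
    rw [← hg2 m]; apply integral_congr_ae
    filter_upwards [hgae m] with ω hω; rw [hω]
  have hgf' : ∀ m, ∫ ω, ‖g' m ω‖ ^ 4 ∂μ = 2 := fun m => by
    rw [← hgf m]; apply integral_congr_ae
    filter_upwards [hgae m] with ω hω; rw [hω]
  have hu2' : ∫ ω, ‖u' ω‖ ^ 2 ∂μ = 1 := by
    rw [← hu2]; apply integral_congr_ae; filter_upwards [huae] with ω hω; rw [hω]
  have huf' : ∫ ω, ‖u' ω‖ ^ 4 ∂μ = 2 := by
    rw [← huf]; apply integral_congr_ae; filter_upwards [huae] with ω hω; rw [hω]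
  have hrpow : ∀ x : ℝ, x ^ ((4 : ENNReal)).toReal = x ^ (4 : ℕ) := by
    intro x
    rw [show ((4 : ENNReal)).toReal = ((4 : ℕ) : ℝ) by norm_num, Real.rpow_natCast]
  have intU4' : Integrable (fun ω => ‖u' ω‖ ^ 4) μ := by
    have h1 := hu4.integrable_norm_rpow (by norm_num) (by norm_num)
    simp only [hrpow] at h1
    exact h1.congr (by filter_upwards [huae] with ω hω; rw [hω])
  have intG4' : ∀ m, Integrable (fun ω => ‖g' m ω‖ ^ 4) μ := by
    intro m
    have h1 := (hg4 m).integrable_norm_rpow (by norm_num) (by norm_num)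
    simp only [hrpow] at h1
    exact h1.congr (by filter_upwards [hgae m] with ω hω; rw [hω])
  obtain ⟨E1', V'⟩ := keyhole_aux μ β g' u' hmg' hmu' hindep' hg2' hgf' hu2' huf' intU4' intG4'
  have hpt : ∀ ω, (∑ m, ‖h ω m‖ ^ 2) = β * (‖u ω‖ ^ 2 * ∑ m, ‖g ω m‖ ^ 2) := by
    intro ω
    have hb : ‖((Real.sqrt β : ℝ) : ℂ)‖ ^ 2 = β := by
      rw [Complex.norm_real, Real.norm_eq_abs, abs_of_nonneg (Real.sqrt_nonneg β),
        Real.sq_sqrt hβ.le]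
    simp only [hdef, norm_mul, mul_pow, hb, Finset.mul_sum]
    exact Finset.sum_congr rfl fun m _ => by ring
  have hS : (fun ω => ∑ m, ‖h ω m‖ ^ 2)
      =ᵐ[μ] (fun ω => β * (‖u' ω‖ ^ 2 * ∑ m, ‖g' m ω‖ ^ 2)) := by
    have hall : ∀ᵐ ω ∂μ, ∀ m, g ω m = g' m ω := ae_all_iff.2 fun m => hgae m
    filter_upwards [huae, hall] with ω h1 h2
    rw [hpt ω, h1]
    congr 2
    exact Finset.sum_congr rfl fun m _ => by rw [h2 m]
  have hM0 : (M : ℝ) ≠ 0 := Nat.cast_ne_zero.2 hM.ne'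
  have hb0 : β ≠ 0 := hβ.ne'
  refine ⟨?_, ?_, ?_⟩
  · rw [integral_congr_ae hS, E1']
  · rw [keyhole_variance_congr hS, V', integral_congr_ae hS, E1']
    field_simp
  · have h2 := (tendsto_const_nhds (x := (1:ℝ)) (f := atTop (α := ℕ))).add
      (tendsto_const_div_atTop_nhds_zero_nat 2)
    simpa using h2
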